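/- Let 0 < b_c < a_c, let k₁ ∈ (−b_c², 0), and let (x, y, z) ∈ ℝ³. For κ ∈ (−b_c², 0) define the path c(κ) := (x·√((a_c² + κ)/(a_c² + k₁)), y·√((b_c² + κ)/(b_c² + k₁)), z·√(κ/k₁)). Then for every κ ∈ (−b_c², 0), c is differentiable at κ and its derivative equals (1/2)·(c(κ)ₓ/(a_c² + κ), c(κ)_y/(b_c² + κ), c(κ)_z/κ), i.e., one half of the normal vector at c(κ) of the confocal one-sheeted hyperboloid with parameter κ. Hence the trajectories of points under the scaling family are orthogonal trajectories of the confocal one-sheeted hyperboloids. -/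

import Mathlib

lemma sqrt_deriv_aux (A C κ : ℝ) (hC : C ≠ 0) (h1 : 0 < (A + κ) / C) :
    HasDerivAt (fun t => Real.sqrt ((A + t) / C))
      ((1 / 2) * (Real.sqrt ((A + κ) / C) / (A + κ))) κ := by
  have hf : HasDerivAt (fun t => (A + t) / C) (1 / C) κ := by
    simpa using ((hasDerivAt_id κ).const_add A).div_const C
  have h := hf.sqrt (ne_of_gt h1)
  convert h using 1
  have hs : Real.sqrt ((A + κ) / C) ≠ 0 := ne_of_gt (Real.sqrt_pos.mpr h1)
  have hmul : Real.sqrt ((A + κ) / C) * Real.sqrt ((A + κ) / C) = (A + κ) / C :=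
    Real.mul_self_sqrt h1.le
  have hAκ : A + κ ≠ 0 := by
    rcases div_pos_iff.mp h1 with ⟨h, _⟩ | ⟨h, _⟩ <;> [exact ne_of_gt h; exact ne_of_lt h]
  rw [eq_div_iff hC] at hmul
  field_simp
  linear_combination hmul

/-- The trajectories of points under the axial scaling family are orthogonal
trajectories of the confocal one-sheeted hyperboloids: the path
`c(κ) = γ(k₁, κ)(x, y, z)` has at every `κ ∈ (−b_c², 0)` the derivative
`(1/2)·(c(κ)ₓ/(a_c²+κ), c(κ)_y/(b_c²+κ), c(κ)_z/κ)`, i.e. one half of the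
normal vector of the hyperboloid with parameter `κ` at `c(κ)`. -/
theorem stmt6 (ac bc k1 : ℝ) (hbc : 0 < bc) (hba : bc < ac)
    (hk1 : k1 ∈ Set.Ioo (-bc ^ 2) 0)
    (x y z : ℝ)
    (c : ℝ → EuclideanSpace ℝ (Fin 3))
    (hc : ∀ κ, c κ = ![x * Real.sqrt ((ac ^ 2 + κ) / (ac ^ 2 + k1)),
                      y * Real.sqrt ((bc ^ 2 + κ) / (bc ^ 2 + k1)),
                      z * Real.sqrt (κ / k1)]) :
    ∀ κ ∈ Set.Ioo (-bc ^ 2 : ℝ) 0,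
      HasDerivAt c
        ((1 / 2 : ℝ) •
          (WithLp.toLp 2 ![c κ 0 / (ac ^ 2 + κ), c κ 1 / (bc ^ 2 + κ), c κ 2 / κ] :
            EuclideanSpace ℝ (Fin 3))) κ := by
  intro κ hκ
  obtain ⟨hκ1, hκ2⟩ := hκ
  obtain ⟨hk11, hk12⟩ := hk1
  have hbc2 : (0:ℝ) < bc ^ 2 := by positivity
  have hba2 : bc ^ 2 < ac ^ 2 := by nlinarith
  have hak1 : 0 < ac ^ 2 + k1 := by nlinarith
  have hbk1 : 0 < bc ^ 2 + k1 := by nlinarith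
  have haκ : 0 < ac ^ 2 + κ := by nlinarith
  have hbκ : 0 < bc ^ 2 + κ := by nlinarith
  have h1 : 0 < (ac ^ 2 + κ) / (ac ^ 2 + k1) := div_pos haκ hak1
  have h2 : 0 < (bc ^ 2 + κ) / (bc ^ 2 + k1) := div_pos hbκ hbk1
  have h3' : 0 < (0 + κ) / k1 := by
    rw [zero_add]; exact div_pos_of_neg_of_neg hκ2 hk12
  have d0 := (sqrt_deriv_aux (ac ^ 2) (ac ^ 2 + k1) κ (ne_of_gt hak1) h1).const_mul x
  have d1 := (sqrt_deriv_aux (bc ^ 2) (bc ^ 2 + k1) κ (ne_of_gt hbk1) h2).const_mul y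
  have d2 := (sqrt_deriv_aux 0 k1 κ (ne_of_lt hk12) h3').const_mul z
  simp only [zero_add] at d2
  have H : HasDerivAt
      (fun t => (![x * Real.sqrt ((ac ^ 2 + t) / (ac ^ 2 + k1)),
                   y * Real.sqrt ((bc ^ 2 + t) / (bc ^ 2 + k1)),
                   z * Real.sqrt (t / k1)] : Fin 3 → ℝ))
      (![x * (1 / 2 * (Real.sqrt ((ac ^ 2 + κ) / (ac ^ 2 + k1)) / (ac ^ 2 + κ))),
         y * (1 / 2 * (Real.sqrt ((bc ^ 2 + κ) / (bc ^ 2 + k1)) / (bc ^ 2 + κ))),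
         z * (1 / 2 * (Real.sqrt (κ / k1) / κ))]) κ := by
    rw [hasDerivAt_pi]
    intro i
    fin_cases i
    · simpa using d0
    · simpa using d1
    · simpa using d2
  have key := (((PiLp.continuousLinearEquiv 2 ℝ (fun _ : Fin 3 => ℝ)).symm :
      (Fin 3 → ℝ) →L[ℝ] EuclideanSpace ℝ (Fin 3)).hasFDerivAt).comp_hasDerivAt κ H
  have hcc : c = fun t => (WithLp.toLp 2 ![x * Real.sqrt ((ac ^ 2 + t) / (ac ^ 2 + k1)),
                   y * Real.sqrt ((bc ^ 2 + t) / (bc ^ 2 + k1)),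
                   z * Real.sqrt (t / k1)] : EuclideanSpace ℝ (Fin 3)) :=
    funext fun t => congrArg (WithLp.toLp 2) (hc t)
  have key' : HasDerivAt (F := EuclideanSpace ℝ (Fin 3))
      (fun t => (WithLp.toLp 2 ![x * Real.sqrt ((ac ^ 2 + t) / (ac ^ 2 + k1)),
                   y * Real.sqrt ((bc ^ 2 + t) / (bc ^ 2 + k1)),
                   z * Real.sqrt (t / k1)] : EuclideanSpace ℝ (Fin 3)))
      ((WithLp.toLp 2 ![x * (1 / 2 * (Real.sqrt ((ac ^ 2 + κ) / (ac ^ 2 + k1)) / (ac ^ 2 + κ))),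
         y * (1 / 2 * (Real.sqrt ((bc ^ 2 + κ) / (bc ^ 2 + k1)) / (bc ^ 2 + κ))),
         z * (1 / 2 * (Real.sqrt (κ / k1) / κ))] : EuclideanSpace ℝ (Fin 3))) κ := key
  rw [hcc]
  convert key' using 1
  ext i
  fin_cases i <;> simp [hc] <;> ring
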